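/- Let λ₁ > 0 be the smallest positive element among distinct reals λ₁,...,λ_l (l ≥ 2) with positive integer multiplicities m_j, and suppose ∑_{j≠1} m_j λ₁λ_j/(λ₁ − λ_j) = 0. Then every term m_j λ₁λ_j/(λ₁ − λ_j) in the sum is ≤ 0, hence each term vanishes, hence every λ_j with j ≠ 1 satisfies λ_j λ₁ (λ₁ − λ_j)⁻¹ = 0, i.e. λ_j = 0 for all j ≠ 1, so l = 2. -/

import Mathlib

/-- Flat case of the Cartan identity argument: if λ₁ is the smallest positive
curvature, every term in the Cartan sum is nonpositive, hence vanishes,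
so all other curvatures are zero and there are exactly two of them. -/
theorem stmt2 (l : ℕ) (hl : 2 ≤ l) (lam : Fin l → ℝ) (m : Fin l → ℕ)
    (hdist : Function.Injective lam) (hm : ∀ i, 0 < m i)
    (i1 : Fin l) (h1pos : 0 < lam i1)
    (hmin : ∀ j : Fin l, 0 < lam j → lam i1 ≤ lam j)
    (hcartan : ∑ j ∈ Finset.univ.erase i1,
      (m j : ℝ) * (lam i1 * lam j) / (lam i1 - lam j) = 0) :
    (∀ j ∈ Finset.univ.erase i1,
        (m j : ℝ) * (lam i1 * lam j) / (lam i1 - lam j) ≤ 0) ∧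
    (∀ j ∈ Finset.univ.erase i1,
        (m j : ℝ) * (lam i1 * lam j) / (lam i1 - lam j) = 0) ∧
    (∀ j : Fin l, j ≠ i1 → lam j = 0) ∧ l = 2 := by
  have hne : ∀ j : Fin l, j ≠ i1 → lam j ≠ lam i1 := fun j hj h =>
    hj (hdist h)
  have hnonpos : ∀ j ∈ Finset.univ.erase i1,
      (m j : ℝ) * (lam i1 * lam j) / (lam i1 - lam j) ≤ 0 := by
    intro j hj
    have hji : j ≠ i1 := (Finset.mem_erase.mp hj).1
    have hmj : (0:ℝ) < m j := by exact_mod_cast hm j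
    rcases le_or_gt (lam j) 0 with hle | hpos
    · apply div_nonpos_of_nonpos_of_nonneg
      · exact mul_nonpos_of_nonneg_of_nonpos hmj.le
          (mul_nonpos_of_nonneg_of_nonpos h1pos.le hle)
      · have : lam j < lam i1 := lt_of_le_of_lt hle h1pos
        linarith
    · have h1le : lam i1 < lam j := lt_of_le_of_ne (hmin j hpos) (Ne.symm (hne j hji))
      apply le_of_lt
      apply div_neg_of_pos_of_neg
      · exact mul_pos hmj (mul_pos h1pos hpos)
      · linarith
  have hzero : ∀ j ∈ Finset.univ.erase i1,
      (m j : ℝ) * (lam i1 * lam j) / (lam i1 - lam j) = 0 := by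
    intro j hj
    exact (Finset.sum_eq_zero_iff_of_nonpos hnonpos).mp hcartan j hj
  have hlamzero : ∀ j : Fin l, j ≠ i1 → lam j = 0 := by
    intro j hj
    have hz := hzero j (Finset.mem_erase.mpr ⟨hj, Finset.mem_univ j⟩)
    have hmj : (m j : ℝ) ≠ 0 := by
      have := hm j; positivity
    have hd : lam i1 - lam j ≠ 0 := sub_ne_zero.mpr (Ne.symm (hne j hj))
    have := (div_eq_zero_iff.mp hz).resolve_right hd
    rcases mul_eq_zero.mp this with h | h
    · exact absurd h hmj
    · exact (mul_eq_zero.mp h).resolve_left h1pos.ne'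
  refine ⟨hnonpos, hzero, hlamzero, ?_⟩
  -- injectivity: at most one j ≠ i1 (all map to 0), so l ≤ 2
  by_contra hne2
  have hl3 : 3 ≤ l := lt_of_le_of_ne hl (Ne.symm hne2)
  -- find two distinct indices ≠ i1
  have : ∃ a b : Fin l, a ≠ b ∧ a ≠ i1 ∧ b ≠ i1 := by
    have hcard : 2 ≤ (Finset.univ.erase i1).card := by
      rw [Finset.card_erase_of_mem (Finset.mem_univ i1), Finset.card_univ, Fintype.card_fin]
      omega
    obtain ⟨a, ha, b, hb, hab⟩ := Finset.one_lt_card.mp hcard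
    exact ⟨a, b, hab, (Finset.mem_erase.mp ha).1, (Finset.mem_erase.mp hb).1⟩
  obtain ⟨a, b, hab, ha, hb⟩ := this
  exact hab (hdist ((hlamzero a ha).trans (hlamzero b hb).symm))
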